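/- Let D = B×C with B, C finite-dimensional, and let ψ : A⊗D → D⊗A be a map such that both Θ := (p_B⊗id_A)∘ψ∘(id_A⊗i_B) : A⊗B → B⊗A and Υ := (p_C⊗id_A)∘ψ∘(id_A⊗i_C) : A⊗C → C⊗A are twisting maps. Then ψ is a twisting map if and only if ψ = Θ ⊕ Υ, i.e., ψ(a⊗(b,c)) = (i_B⊗id_A)(Θ(a⊗b)) + (i_C⊗id_A)(Υ(a⊗c)) for all a∈A, b∈B, c∈C. -/

import Mathlib

open TensorProduct LinearMap

variable (K : Type*)

def IsTwistingMap {A B : Type*} [Field K] [Ring A] [Ring B] [Algebra K A] [Algebra K B]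
    (χ : A ⊗[K] B →ₗ[K] B ⊗[K] A) : Prop :=
  (∀ b : B, χ ((1 : A) ⊗ₜ[K] b) = b ⊗ₜ[K] (1 : A)) ∧
  (∀ a : A, χ (a ⊗ₜ[K] (1 : B)) = (1 : B) ⊗ₜ[K] a) ∧
  (∀ (a a' : A) (b : B),
    χ ((a * a') ⊗ₜ[K] b) =
      lTensor B (mul' K A)
        (TensorProduct.assoc K B A A
          (rTensor A χ
            ((TensorProduct.assoc K A B A).symm (a ⊗ₜ[K] χ (a' ⊗ₜ[K] b)))))) ∧
  (∀ (a : A) (b b' : B),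
    χ (a ⊗ₜ[K] (b * b')) =
      rTensor A (mul' K B)
        ((TensorProduct.assoc K B B A).symm
          (lTensor B χ
            (TensorProduct.assoc K B A B (χ (a ⊗ₜ[K] b) ⊗ₜ[K] b')))))

noncomputable def twistMul {A B : Type*} [Field K] [Ring A] [Ring B] [Algebra K A] [Algebra K B]
    (χ : A ⊗[K] B →ₗ[K] B ⊗[K] A) :
    (B ⊗[K] A) ⊗[K] (B ⊗[K] A) →ₗ[K] B ⊗[K] A :=
  TensorProduct.map (mul' K B) (mul' K A)
    ∘ₗ (TensorProduct.assoc K B B (A ⊗[K] A)).symm.toLinearMap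
    ∘ₗ lTensor B (TensorProduct.assoc K B A A).toLinearMap
    ∘ₗ lTensor B (rTensor A χ)
    ∘ₗ lTensor B (TensorProduct.assoc K A B A).symm.toLinearMap
    ∘ₗ (TensorProduct.assoc K B A (B ⊗[K] A)).toLinearMap

set_option synthInstance.maxHeartbeats 1000000
set_option maxHeartbeats 1000000

section AuxLemmas

variable {K}
variable {A B C : Type*} [Field K] [Ring A] [Ring B] [Ring C]
  [Algebra K A] [Algebra K B] [Algebra K C]

lemma aux1 {M N : Type*} [AddCommMonoid M] [AddCommMonoid N] [Module K M] [Module K N]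
    (j : M →ₗ[K] N) (Z : M ⊗[K] A) (x : A) :
    lTensor N (mul' K A) ((TensorProduct.assoc K N A A) ((rTensor A j Z) ⊗ₜ[K] x)) =
      rTensor A j (lTensor M (mul' K A) ((TensorProduct.assoc K M A A) (Z ⊗ₜ[K] x))) := by
  induction Z using TensorProduct.induction_on with
  | zero => simp
  | tmul m y => simp
  | add Z₁ Z₂ h1 h2 => simp only [map_add, add_tmul, h1, h2]

lemma auxdecomp (X : (B × C) ⊗[K] A) :
    rTensor A (LinearMap.inl K B C) (rTensor A (LinearMap.fst K B C) X) +
      rTensor A (LinearMap.inr K B C) (rTensor A (LinearMap.snd K B C) X) = X := by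
  induction X using TensorProduct.induction_on with
  | zero => simp
  | tmul p x =>
    obtain ⟨b, c⟩ := p
    simp only [rTensor_tmul, fst_apply, snd_apply, inl_apply, inr_apply, ← add_tmul,
      Prod.mk_add_mk, add_zero, zero_add]
  | add X Y hX hY => simp only [map_add]; rw [add_add_add_comm, hX, hY]

lemma auxMe (ψ : A ⊗[K] (B × C) →ₗ[K] (B × C) ⊗[K] A) (e : B × C)
    (he : ∀ x : A, ψ (x ⊗ₜ[K] e) = e ⊗ₜ[K] x) (X : (B × C) ⊗[K] A) :
    rTensor A (mul' K (B × C)) ((TensorProduct.assoc K (B × C) (B × C) A).symm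
      (lTensor (B × C) ψ ((TensorProduct.assoc K (B × C) A (B × C)) (X ⊗ₜ[K] e)))) =
      rTensor A (LinearMap.mulRight K e) X := by
  induction X using TensorProduct.induction_on with
  | zero => simp
  | tmul d x => simp [he]
  | add X Y hX hY => simp only [map_add, add_tmul, hX, hY]

lemma auxBB (b : B) (W : B ⊗[K] A) :
    rTensor A (mul' K (B × C)) ((TensorProduct.assoc K (B × C) (B × C) A).symm
      (((b, 0) : B × C) ⊗ₜ[K] rTensor A (LinearMap.inl K B C) W)) =
      rTensor A (LinearMap.inl K B C)
        (rTensor A (mul' K B) ((TensorProduct.assoc K B B A).symm (b ⊗ₜ[K] W))) := by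
  induction W using TensorProduct.induction_on with
  | zero => simp
  | tmul b' z => simp [Prod.mk_mul_mk]
  | add W V hW hV => simp only [map_add, tmul_add, hW, hV]

lemma auxBC (b : B) (V : C ⊗[K] A) :
    rTensor A (mul' K (B × C)) ((TensorProduct.assoc K (B × C) (B × C) A).symm
      (((b, 0) : B × C) ⊗ₜ[K] rTensor A (LinearMap.inr K B C) V)) = 0 := by
  induction V using TensorProduct.induction_on with
  | zero => simp
  | tmul c' z => simp [Prod.mk_mul_mk, Prod.mk_zero_zero]
  | add W V hW hV => simp only [map_add, tmul_add, hW, hV, add_zero]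

lemma auxCB (c : C) (W : B ⊗[K] A) :
    rTensor A (mul' K (B × C)) ((TensorProduct.assoc K (B × C) (B × C) A).symm
      (((0, c) : B × C) ⊗ₜ[K] rTensor A (LinearMap.inl K B C) W)) = 0 := by
  induction W using TensorProduct.induction_on with
  | zero => simp
  | tmul b' z => simp [Prod.mk_mul_mk, Prod.mk_zero_zero]
  | add W V hW hV => simp only [map_add, tmul_add, hW, hV, add_zero]

lemma auxCC (c : C) (V : C ⊗[K] A) :
    rTensor A (mul' K (B × C)) ((TensorProduct.assoc K (B × C) (B × C) A).symm
      (((0, c) : B × C) ⊗ₜ[K] rTensor A (LinearMap.inr K B C) V)) =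
      rTensor A (LinearMap.inr K B C)
        (rTensor A (mul' K C) ((TensorProduct.assoc K C C A).symm (c ⊗ₜ[K] V))) := by
  induction V using TensorProduct.induction_on with
  | zero => simp
  | tmul c' z => simp [Prod.mk_mul_mk]
  | add W V hW hV => simp only [map_add, tmul_add, hW, hV]

lemma auxL12 {E : Type*} [AddCommMonoid E] [Module K E]
    (ψ : A ⊗[K] (B × C) →ₗ[K] (B × C) ⊗[K] A)
    (j : E →ₗ[K] B × C) (θ : A ⊗[K] E →ₗ[K] E ⊗[K] A)
    (hs : ∀ (a : A) (e : E), ψ (a ⊗ₜ[K] j e) = rTensor A j (θ (a ⊗ₜ[K] e)))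
    (a : A) (Y : E ⊗[K] A) :
    lTensor (B × C) (mul' K A) ((TensorProduct.assoc K (B × C) A A)
      (rTensor A ψ ((TensorProduct.assoc K A (B × C) A).symm (a ⊗ₜ[K] rTensor A j Y)))) =
    rTensor A j (lTensor E (mul' K A) ((TensorProduct.assoc K E A A)
      (rTensor A θ ((TensorProduct.assoc K A E A).symm (a ⊗ₜ[K] Y))))) := by
  induction Y using TensorProduct.induction_on with
  | zero => simp
  | tmul e x =>
    rw [rTensor_tmul, TensorProduct.assoc_symm_tmul, TensorProduct.assoc_symm_tmul,
      rTensor_tmul, rTensor_tmul, hs]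
    exact aux1 j (θ (a ⊗ₜ[K] e)) x
  | add Y₁ Y₂ h1 h2 => simp only [map_add, tmul_add, h1, h2]

lemma auxL3 (ψ : A ⊗[K] (B × C) →ₗ[K] (B × C) ⊗[K] A)
    (θ : A ⊗[K] B →ₗ[K] B ⊗[K] A) (υ : A ⊗[K] C →ₗ[K] C ⊗[K] A)
    (h : ∀ (a : A) (b : B) (c : C), ψ (a ⊗ₜ[K] ((b, c) : B × C)) =
      rTensor A (LinearMap.inl K B C) (θ (a ⊗ₜ[K] b)) +
        rTensor A (LinearMap.inr K B C) (υ (a ⊗ₜ[K] c)))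
    (X : B ⊗[K] A) (b' : B) (c' : C) :
    rTensor A (mul' K (B × C)) ((TensorProduct.assoc K (B × C) (B × C) A).symm
      (lTensor (B × C) ψ ((TensorProduct.assoc K (B × C) A (B × C))
        ((rTensor A (LinearMap.inl K B C) X) ⊗ₜ[K] ((b', c') : B × C))))) =
    rTensor A (LinearMap.inl K B C) (rTensor A (mul' K B)
      ((TensorProduct.assoc K B B A).symm
        (lTensor B θ ((TensorProduct.assoc K B A B) (X ⊗ₜ[K] b'))))) := by
  induction X using TensorProduct.induction_on with
  | zero => simp
  | tmul b x =>
    rw [rTensor_tmul, inl_apply, TensorProduct.assoc_tmul, lTensor_tmul, h,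
      tmul_add, map_add, map_add, TensorProduct.assoc_tmul, lTensor_tmul,
      auxBB, auxBC, add_zero]
  | add X₁ X₂ h1 h2 => simp only [map_add, add_tmul, h1, h2]

lemma auxL4 (ψ : A ⊗[K] (B × C) →ₗ[K] (B × C) ⊗[K] A)
    (θ : A ⊗[K] B →ₗ[K] B ⊗[K] A) (υ : A ⊗[K] C →ₗ[K] C ⊗[K] A)
    (h : ∀ (a : A) (b : B) (c : C), ψ (a ⊗ₜ[K] ((b, c) : B × C)) =
      rTensor A (LinearMap.inl K B C) (θ (a ⊗ₜ[K] b)) +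
        rTensor A (LinearMap.inr K B C) (υ (a ⊗ₜ[K] c)))
    (Y : C ⊗[K] A) (b' : B) (c' : C) :
    rTensor A (mul' K (B × C)) ((TensorProduct.assoc K (B × C) (B × C) A).symm
      (lTensor (B × C) ψ ((TensorProduct.assoc K (B × C) A (B × C))
        ((rTensor A (LinearMap.inr K B C) Y) ⊗ₜ[K] ((b', c') : B × C))))) =
    rTensor A (LinearMap.inr K B C) (rTensor A (mul' K C)
      ((TensorProduct.assoc K C C A).symm
        (lTensor C υ ((TensorProduct.assoc K C A C) (Y ⊗ₜ[K] c'))))) := by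
  induction Y using TensorProduct.induction_on with
  | zero => simp
  | tmul c x =>
    rw [rTensor_tmul, inr_apply, TensorProduct.assoc_tmul, lTensor_tmul, h,
      tmul_add, map_add, map_add, TensorProduct.assoc_tmul, lTensor_tmul,
      auxCB, auxCC, zero_add]
  | add Y₁ Y₂ h1 h2 => simp only [map_add, add_tmul, h1, h2]

end AuxLemmas

theorem twisting_iff_direct_sum {A B C : Type*} [Field K] [Ring A] [Ring B] [Ring C]
    [Algebra K A] [Algebra K B] [Algebra K C]
    [FiniteDimensional K B] [FiniteDimensional K C]
    (ψ : A ⊗[K] (B × C) →ₗ[K] (B × C) ⊗[K] A)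
    (hΘ : IsTwistingMap K
      (rTensor A (LinearMap.fst K B C) ∘ₗ ψ ∘ₗ lTensor A (LinearMap.inl K B C)))
    (hΥ : IsTwistingMap K
      (rTensor A (LinearMap.snd K B C) ∘ₗ ψ ∘ₗ lTensor A (LinearMap.inr K B C))) :
    IsTwistingMap K ψ ↔
      ∀ (a : A) (b : B) (c : C),
        ψ (a ⊗ₜ[K] ((b, c) : B × C)) =
          rTensor A (LinearMap.inl K B C)
              ((rTensor A (LinearMap.fst K B C) ∘ₗ ψ ∘ₗ lTensor A (LinearMap.inl K B C))
                (a ⊗ₜ[K] b)) +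
            rTensor A (LinearMap.inr K B C)
              ((rTensor A (LinearMap.snd K B C) ∘ₗ ψ ∘ₗ lTensor A (LinearMap.inr K B C))
                (a ⊗ₜ[K] c)) := by
  constructor
  · intro hψ a b c
    obtain ⟨h1, h2, h3, h4⟩ := hψ
    have hΘ2 := hΘ.2.1
    have hΥ2 := hΥ.2.1
    simp only [coe_comp, Function.comp_apply, lTensor_tmul, inl_apply, inr_apply] at hΘ2 hΥ2
    have hsum : ∀ x : A, ψ (x ⊗ₜ[K] (((1 : B), (0 : C)) : B × C)) +
        ψ (x ⊗ₜ[K] (((0 : B), (1 : C)) : B × C)) = ((1, 1) : B × C) ⊗ₜ[K] x := by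
      intro x
      rw [← map_add, ← tmul_add, Prod.mk_add_mk, add_zero, zero_add, Prod.mk_one_one, h2 x]
    have hC0 : ∀ x : A, rTensor A (LinearMap.snd K B C)
        (ψ (x ⊗ₜ[K] (((1 : B), (0 : C)) : B × C))) = 0 := by
      intro x
      have h' := congrArg (rTensor A (LinearMap.snd K B C)) (hsum x)
      rw [map_add, hΥ2 x, rTensor_tmul, snd_apply] at h'
      exact add_eq_right.mp h'
    have hB0 : ∀ x : A, rTensor A (LinearMap.fst K B C)
        (ψ (x ⊗ₜ[K] (((0 : B), (1 : C)) : B × C))) = 0 := by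
      intro x
      have h' := congrArg (rTensor A (LinearMap.fst K B C)) (hsum x)
      rw [map_add, hΘ2 x, rTensor_tmul, fst_apply, add_comm] at h'
      exact add_eq_right.mp h'
    have he : ∀ x : A, ψ (x ⊗ₜ[K] (((1 : B), (0 : C)) : B × C)) =
        (((1 : B), (0 : C)) : B × C) ⊗ₜ[K] x := by
      intro x
      conv_lhs => rw [← auxdecomp (ψ (x ⊗ₜ[K] (((1 : B), (0 : C)) : B × C)))]
      rw [hΘ2 x, hC0 x, map_zero, add_zero, rTensor_tmul, inl_apply]
    have hf : ∀ x : A, ψ (x ⊗ₜ[K] (((0 : B), (1 : C)) : B × C)) =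
        (((0 : B), (1 : C)) : B × C) ⊗ₜ[K] x := by
      intro x
      conv_lhs => rw [← auxdecomp (ψ (x ⊗ₜ[K] (((0 : B), (1 : C)) : B × C)))]
      rw [hΥ2 x, hB0 x, map_zero, zero_add, rTensor_tmul, inr_apply]
    have hme : (LinearMap.mulRight K ((((1 : B), (0 : C))) : B × C)) =
        (LinearMap.inl K B C) ∘ₗ (LinearMap.fst K B C) := by
      apply LinearMap.ext
      rintro ⟨b', c'⟩
      simp [Prod.mk_mul_mk]
    have hmf : (LinearMap.mulRight K ((((0 : B), (1 : C))) : B × C)) =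
        (LinearMap.inr K B C) ∘ₗ (LinearMap.snd K B C) := by
      apply LinearMap.ext
      rintro ⟨b', c'⟩
      simp [Prod.mk_mul_mk]
    have keyB : ψ (a ⊗ₜ[K] ((b, 0) : B × C)) = rTensor A (LinearMap.inl K B C)
        (rTensor A (LinearMap.fst K B C) (ψ (a ⊗ₜ[K] ((b, (0 : C)) : B × C)))) := by
      have h4' := h4 a ((b, 0) : B × C) (((1 : B), (0 : C)) : B × C)
      rw [auxMe ψ _ he, Prod.mk_mul_mk, mul_one, mul_zero, hme, rTensor_comp, coe_comp,
        Function.comp_apply] at h4'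
      exact h4'
    have keyC : ψ (a ⊗ₜ[K] ((0, c) : B × C)) = rTensor A (LinearMap.inr K B C)
        (rTensor A (LinearMap.snd K B C) (ψ (a ⊗ₜ[K] (((0 : B), c) : B × C)))) := by
      have h4' := h4 a ((0, c) : B × C) (((0 : B), (1 : C)) : B × C)
      rw [auxMe ψ _ hf, Prod.mk_mul_mk, mul_one, mul_zero, hmf, rTensor_comp, coe_comp,
        Function.comp_apply] at h4'
      exact h4'
    have hbc : ((b, c) : B × C) = ((b, 0) : B × C) + ((0, c) : B × C) := by
      rw [Prod.mk_add_mk, add_zero, zero_add]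
    rw [hbc, tmul_add, map_add, keyB, keyC]
    simp only [coe_comp, Function.comp_apply, lTensor_tmul, inl_apply, inr_apply]
  · intro h
    have hs_inl : ∀ (x : A) (e : B), ψ (x ⊗ₜ[K] (LinearMap.inl K B C) e) =
        rTensor A (LinearMap.inl K B C)
          ((rTensor A (LinearMap.fst K B C) ∘ₗ ψ ∘ₗ lTensor A (LinearMap.inl K B C))
            (x ⊗ₜ[K] e)) := by
      intro x e
      rw [inl_apply, h x e 0, tmul_zero, map_zero, map_zero, add_zero]
    have hs_inr : ∀ (x : A) (e : C), ψ (x ⊗ₜ[K] (LinearMap.inr K B C) e) =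
        rTensor A (LinearMap.inr K B C)
          ((rTensor A (LinearMap.snd K B C) ∘ₗ ψ ∘ₗ lTensor A (LinearMap.inr K B C))
            (x ⊗ₜ[K] e)) := by
      intro x e
      rw [inr_apply, h x 0 e, tmul_zero, map_zero, map_zero, zero_add]
    refine ⟨?_, ?_, ?_, ?_⟩
    · rintro ⟨b, c⟩
      rw [h 1 b c, hΘ.1 b, hΥ.1 c, rTensor_tmul, rTensor_tmul, inl_apply, inr_apply,
        ← add_tmul, Prod.mk_add_mk, add_zero, zero_add]
    · intro a
      rw [Prod.one_eq_mk, h a 1 1, hΘ.2.1 a, hΥ.2.1 a, rTensor_tmul, rTensor_tmul,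
        inl_apply, inr_apply, ← add_tmul, Prod.mk_add_mk, add_zero, zero_add,
        Prod.mk_one_one]
    · intro a a' d
      obtain ⟨b, c⟩ := d
      rw [h a' b c]
      simp only [tmul_add, map_add]
      rw [auxL12 ψ (LinearMap.inl K B C) _ hs_inl a _,
        auxL12 ψ (LinearMap.inr K B C) _ hs_inr a _,
        h (a * a') b c, hΘ.2.2.1 a a' b, hΥ.2.2.1 a a' c]
    · intro a d d'
      obtain ⟨b, c⟩ := d
      obtain ⟨b', c'⟩ := d'
      rw [Prod.mk_mul_mk, h a (b * b') (c * c'), hΘ.2.2.2 a b b', hΥ.2.2.2 a c c',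
        h a b c]
      simp only [add_tmul, map_add]
      rw [auxL3 ψ _ _ h _ b' c', auxL4 ψ _ _ h _ b' c']
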